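/- Let q ≥ 2 be an integer, let Π be a finite projective plane of order q, let μ ≥ 2 be an integer, set δ = 1/√((q+1)·ln(q+1)), and let D ≥ 1 be a real number. Suppose Π contains a (1, μ−1)-saturating set of size k with k ≤ 2D·√((q+1)·ln(q+1)) + 2. Then Π contains a (1, μ)-saturating set of size at most 2·(D + 1 + (D+δ)/q + δ)·√((q+1)·ln(q+1)) + 2. -/

import Mathlib

open scoped Classical in
/-- The number of secants of a point set `S` through a point `Q`, counted with multiplicity:
the multiplicity of a line `ℓ` is `C(#(ℓ ∩ S), 2)`. -/
noncomputable def secantCount (L : Type*) {P : Type*} [Membership P L] [Fintype L]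
    (S : Set P) (Q : P) : ℕ :=
  ∑ ℓ : L, if Q ∈ ℓ then ({p ∈ S | p ∈ ℓ}.ncard).choose 2 else 0

/-- A point set `S` in a projective plane (with line type `L`) is *(1,μ)-saturating* if for
every point `Q` not in `S` the number of secants of `S` through `Q`, counted with
multiplicity, is at least `μ`. -/
def IsMuSaturating (L : Type*) {P : Type*} [Membership P L] [Fintype L]
    (S : Set P) (μ : ℕ) : Prop :=
  ∀ Q : P, Q ∉ S → μ ≤ secantCount L S Q

open Finset Configuration Configuration.ProjectivePlane

set_option linter.unusedSectionVars false

/-- `Q` lies on a line containing a point of `K` and a second point of `S ∪ K`. -/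
def goodQ (L : Type*) {P : Type*} [Membership P L] (S K : Finset P) (Q : P) : Prop :=
  ∃ ℓ : L, Q ∈ ℓ ∧ ∃ p ∈ K, ∃ p' : P, (p' ∈ S ∨ p' ∈ K) ∧ p ≠ p' ∧ p ∈ ℓ ∧ p' ∈ ℓ

open scoped Classical in
noncomputable def badSet (L : Type*) {P : Type*} [Fintype P] [Membership P L]
    (S K : Finset P) : Finset P :=
  Finset.univ.filter fun Q => Q ∉ S ∧ Q ∉ K ∧ ¬ goodQ L S K Q

open scoped Classical in
noncomputable def fixers (L : Type*) {P : Type*} [Fintype P] [Membership P L]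
    (S K : Finset P) (Q : P) : Finset P :=
  Finset.univ.filter fun R => R ∉ S ∧ R ∉ K ∧ R ≠ Q ∧
    ∃ ℓ : L, Q ∈ ℓ ∧ R ∈ ℓ ∧ ∃ p : P, (p ∈ S ∨ p ∈ K) ∧ p ∈ ℓ

noncomputable def rho (q n s : ℕ) (i : ℕ) : ℝ :=
  max 0 (min 1 ((((q - 1) * i + (q - s) : ℕ) : ℝ) / ((n : ℝ) - s - i)))

section Aux

variable {P L : Type*} [Fintype P] [Fintype L] [Membership P L]

open scoped Classical

lemma ncard_sep (S : Finset P) (ℓ : L) :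
    {p ∈ (↑S : Set P) | p ∈ ℓ}.ncard = (S.filter (· ∈ ℓ)).card := by
  rw [← Set.ncard_coe_finset]
  congr 1
  ext p
  simp [Finset.mem_filter]

lemma choose_two_lt (a b : ℕ) (hb : 2 ≤ b) (hab : a + 1 ≤ b) :
    a.choose 2 < b.choose 2 := by
  rcases Nat.lt_or_ge a 2 with h | h
  · have : a.choose 2 = 0 := Nat.choose_eq_zero_of_lt h
    rw [this]
    exact Nat.choose_pos hb
  · calc a.choose 2 < a.choose 1 + a.choose 2 := by
          rw [Nat.choose_one_right]; omega
      _ = (a+1).choose 2 := (Nat.choose_succ_succ a 1).symm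
      _ ≤ b.choose 2 := Nat.choose_le_choose 2 hab

/-- Monotonicity + strict gain of the secant count when passing from `S` to `S ∪ K`. -/
lemma secant_gain (S K : Finset P) (hdisj : ∀ p ∈ K, p ∉ S) (Q : P)
    (hQ : goodQ L S K Q) :
    secantCount L (↑S : Set P) Q + 1 ≤ secantCount L (↑(S ∪ K) : Set P) Q := by
  obtain ⟨ℓ₀, hQℓ₀, p, hpK, p', hp'SK, hpp', hpℓ₀, hp'ℓ₀⟩ := hQ
  have key : secantCount L (↑S : Set P) Q < secantCount L (↑(S ∪ K) : Set P) Q := by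
    unfold secantCount
    apply Finset.sum_lt_sum
    · intro ℓ _
      by_cases h : Q ∈ ℓ
      · simp only [if_pos h]
        apply Nat.choose_le_choose
        rw [ncard_sep, ncard_sep]
        apply Finset.card_le_card
        intro x hx
        simp only [Finset.mem_filter, Finset.mem_union] at hx ⊢
        exact ⟨Or.inl hx.1, hx.2⟩
      · simp only [if_neg h, le_refl]
    · refine ⟨ℓ₀, Finset.mem_univ _, ?_⟩
      simp only [if_pos hQℓ₀]
      rw [ncard_sep, ncard_sep]
      apply choose_two_lt
      · -- both p and p' lie in (S ∪ K).filter (· ∈ ℓ₀)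
        have hp : p ∈ (S ∪ K).filter (· ∈ ℓ₀) := by
          simp [Finset.mem_filter, Finset.mem_union, hpK, hpℓ₀]
        have hp' : p' ∈ (S ∪ K).filter (· ∈ ℓ₀) := by
          simp only [Finset.mem_filter, Finset.mem_union]
          exact ⟨hp'SK, hp'ℓ₀⟩
        have := Finset.one_lt_card.mpr ⟨p, hp, p', hp', hpp'⟩
        omega
      · -- S.filter ⊆ ((S∪K).filter) \ {p}
        have hsub : S.filter (· ∈ ℓ₀) ⊆ ((S ∪ K).filter (· ∈ ℓ₀)).erase p := by
          intro x hx
          simp only [Finset.mem_filter] at hx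
          apply Finset.mem_erase.mpr
          refine ⟨?_, by simp [Finset.mem_filter, Finset.mem_union, hx.1, hx.2]⟩
          rintro rfl
          exact hdisj _ hpK hx.1
        have h1 := Finset.card_le_card hsub
        have h2 : (((S ∪ K).filter (· ∈ ℓ₀)).erase p).card
            = ((S ∪ K).filter (· ∈ ℓ₀)).card - 1 := by
          apply Finset.card_erase_of_mem
          simp [Finset.mem_filter, Finset.mem_union, hpK, hpℓ₀]
        have h3 : 1 ≤ ((S ∪ K).filter (· ∈ ℓ₀)).card :=
          Finset.card_pos.mpr ⟨p, by simp [Finset.mem_filter, Finset.mem_union, hpK, hpℓ₀]⟩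
        omega
  omega

/-- Every point outside a `(1,ν)`-saturating set (`ν ≥ 1`) lies on a `2`-secant of `S`. -/
lemma exists_two_secant (S : Finset P) (ν : ℕ) (hν : 1 ≤ ν)
    (hS : IsMuSaturating L (↑S : Set P) ν) (Q : P) (hQ : Q ∉ S) :
    ∃ ℓ : L, Q ∈ ℓ ∧ 2 ≤ (S.filter (· ∈ ℓ)).card := by
  have h := hS Q (by simpa using hQ)
  have hpos : 0 < secantCount L (↑S : Set P) Q := lt_of_lt_of_le hν h
  unfold secantCount at hpos
  obtain ⟨ℓ, -, hℓ⟩ := Finset.exists_ne_zero_of_sum_ne_zero hpos.ne'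
  by_cases hQℓ : Q ∈ ℓ
  · refine ⟨ℓ, hQℓ, ?_⟩
    rw [if_pos hQℓ, ncard_sep] at hℓ
    by_contra hlt
    push_neg at hlt
    exact hℓ (Nat.choose_eq_zero_of_lt hlt)
  · rw [if_neg hQℓ] at hℓ; exact absurd rfl hℓ

end Aux

section Count

variable {P L : Type*} [Fintype P] [Fintype L] [Membership P L]
  [Configuration.ProjectivePlane P L]

open scoped Classical

lemma card_pts (q : ℕ) (horder : Configuration.ProjectivePlane.order P L = q) (ℓ : L) :
    (Finset.univ.filter (· ∈ ℓ) : Finset P).card = q + 1 := by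
  have h := Configuration.ProjectivePlane.pointCount_eq P ℓ
  rw [horder] at h
  rw [← h, Configuration.pointCount, Nat.card_eq_fintype_card, Fintype.card_subtype]

lemma fixers_card (q : ℕ) (hq : 2 ≤ q)
    (horder : Configuration.ProjectivePlane.order P L = q)
    (ν : ℕ) (hν : 1 ≤ ν) (S : Finset P) (hS : IsMuSaturating L (↑S : Set P) ν)
    (K : Finset P) (hdisj : ∀ p ∈ K, p ∉ S)
    (Q : P) (hQbad : Q ∈ badSet L S K) :
    (q - 1) * K.card + (q - S.card) ≤ (fixers L S K Q).card := by
  simp only [badSet, Finset.mem_filter, Finset.mem_univ, true_and] at hQbad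
  obtain ⟨hQS, hQK, hgood⟩ := hQbad
  have hcard1 : 1 < Fintype.card P := by
    rw [Configuration.ProjectivePlane.card_points P L, horder]
    have : 0 < q ^ 2 := by positivity
    omega
  obtain ⟨a0, b0, hab⟩ := Fintype.exists_pair_of_one_lt_card hcard1
  set f : P → L := fun p =>
    if h : Q = p then Configuration.HasLines.mkLine hab
    else Configuration.HasLines.mkLine h with hf
  have hfQ : ∀ p : P, Q ≠ p → Q ∈ f p ∧ p ∈ f p := by
    intro p hp
    simp only [hf, dif_neg hp]
    exact Configuration.HasLines.mkLine_ax hp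
  have hQU : ∀ p : P, (p ∈ S ∨ p ∈ K) → Q ≠ p := by
    rintro p (h | h) rfl
    exacts [hQS h, hQK h]
  classical
  set U : Finset P := S ∪ K with hU
  have hUmem : ∀ p : P, p ∈ U ↔ (p ∈ S ∨ p ∈ K) := fun p => Finset.mem_union
  set Lines : Finset L := U.image f with hLines
  have hQLines : ∀ ℓ ∈ Lines, Q ∈ ℓ := by
    intro ℓ hℓ
    obtain ⟨p, hp, rfl⟩ := Finset.mem_image.mp hℓ
    exact (hfQ p (hQU p ((hUmem p).mp hp))).1
  set W : L → Finset P := fun ℓ => (Finset.univ.filter (· ∈ ℓ)).filter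
      (fun R => R ∉ S ∧ R ∉ K ∧ R ≠ Q) with hW
  have hsub : Lines.biUnion W ⊆ fixers L S K Q := by
    intro R hR
    obtain ⟨ℓ, hℓ, hRW⟩ := Finset.mem_biUnion.mp hR
    obtain ⟨p, hpU, rfl⟩ := Finset.mem_image.mp hℓ
    have hQp := hQU p ((hUmem p).mp hpU)
    simp only [hW, Finset.mem_filter, Finset.mem_univ, true_and] at hRW
    obtain ⟨hRl, hRS, hRK, hRQ⟩ := hRW
    simp only [fixers, Finset.mem_filter, Finset.mem_univ, true_and]
    exact ⟨hRS, hRK, hRQ, f p, (hfQ p hQp).1, hRl, p, (hUmem p).mp hpU, (hfQ p hQp).2⟩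
  have hdisjW : ∀ ℓ₁ ∈ Lines, ∀ ℓ₂ ∈ Lines, ℓ₁ ≠ ℓ₂ → Disjoint (W ℓ₁) (W ℓ₂) := by
    intro ℓ₁ h1 ℓ₂ h2 hne
    rw [Finset.disjoint_left]
    intro R hR1 hR2
    simp only [hW, Finset.mem_filter, Finset.mem_univ, true_and] at hR1 hR2
    rcases Configuration.Nondegenerate.eq_or_eq (hQLines ℓ₁ h1) hR1.1
      (hQLines ℓ₂ h2) hR2.1 with h | h
    · exact hR1.2.2.2 h.symm
    · exact hne h
  have hcardbi : (Lines.biUnion W).card = ∑ ℓ ∈ Lines, (W ℓ).card :=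
    Finset.card_biUnion hdisjW
  set a : L → ℕ := fun ℓ => (U.filter (· ∈ ℓ)).card with ha
  -- per-line partition count
  have hline : ∀ ℓ ∈ Lines, (W ℓ).card + (a ℓ + 1) = q + 1 := by
    intro ℓ hℓ
    have hQl : Q ∈ ℓ := hQLines ℓ hℓ
    have hWeq : W ℓ = (Finset.univ.filter (· ∈ ℓ)) \ (U.filter (· ∈ ℓ) ∪ {Q}) := by
      ext R
      constructor
      · intro h
        simp only [hW, Finset.mem_filter, Finset.mem_univ, true_and] at h
        obtain ⟨h1, h2, h3, h4⟩ := h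
        refine Finset.mem_sdiff.mpr ⟨by simp [h1], ?_⟩
        rw [Finset.mem_union, Finset.mem_singleton]
        push_neg
        refine ⟨fun hc => ?_, h4⟩
        rcases (hUmem R).mp (Finset.mem_filter.mp hc).1 with h | h
        exacts [absurd h h2, absurd h h3]
      · intro h
        rw [Finset.mem_sdiff, Finset.mem_union, Finset.mem_singleton] at h
        obtain ⟨h1, h2⟩ := h
        push_neg at h2
        have hRl : R ∈ ℓ := (Finset.mem_filter.mp h1).2
        simp only [hW, Finset.mem_filter, Finset.mem_univ, true_and]
        refine ⟨hRl, ?_, ?_, h2.2⟩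
        · intro hc; exact h2.1 (Finset.mem_filter.mpr ⟨(hUmem R).mpr (Or.inl hc), hRl⟩)
        · intro hc; exact h2.1 (Finset.mem_filter.mpr ⟨(hUmem R).mpr (Or.inr hc), hRl⟩)
    have hss : (U.filter (· ∈ ℓ) ∪ {Q}) ⊆ Finset.univ.filter (· ∈ ℓ) := by
      intro x hx
      rcases Finset.mem_union.mp hx with h | h
      · simp only [Finset.mem_filter] at h ⊢
        exact ⟨Finset.mem_univ x, h.2⟩
      · rw [Finset.mem_singleton] at h
        subst h
        simp only [Finset.mem_filter]
        exact ⟨Finset.mem_univ x, hQl⟩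
    have hcu : (U.filter (· ∈ ℓ) ∪ {Q}).card = a ℓ + 1 := by
      rw [Finset.card_union_of_disjoint, Finset.card_singleton]
      rw [Finset.disjoint_singleton_right]
      intro hc
      exact hQU Q ((hUmem Q).mp (Finset.mem_filter.mp hc).1) rfl
    rw [hWeq, ← hcu, Finset.card_sdiff_add_card_eq_card hss, card_pts q horder]
  have hsumA : ∑ ℓ ∈ Lines, a ℓ ≤ U.card := by
    have h1 : ∀ ℓ, a ℓ = ∑ p ∈ U, if p ∈ ℓ then 1 else 0 := by
      intro ℓ
      show (U.filter (· ∈ ℓ)).card = _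
      exact Finset.card_filter _ _
    calc ∑ ℓ ∈ Lines, a ℓ = ∑ p ∈ U, ∑ ℓ ∈ Lines, if p ∈ ℓ then 1 else 0 := by
          simp_rw [h1]; exact Finset.sum_comm
      _ ≤ ∑ p ∈ U, 1 := by
          apply Finset.sum_le_sum
          intro p hp
          rw [← Finset.card_filter]
          apply Finset.card_le_one.mpr
          intro ℓ₁ h1' ℓ₂ h2'
          simp only [Finset.mem_filter] at h1' h2'
          rcases Configuration.Nondegenerate.eq_or_eq (hQLines ℓ₁ h1'.1) h1'.2
            (hQLines ℓ₂ h2'.1) h2'.2 with h | h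
          · exact absurd h (hQU p ((hUmem p).mp hp))
          · exact h
      _ = U.card := by rw [Finset.sum_const, smul_eq_mul, mul_one]
  set LS : Finset L := S.image f with hLS
  set LK : Finset L := K.image f with hLK
  have hLineseq : Lines = LS ∪ LK := by rw [hLines, hU, Finset.image_union]
  have hdisjL : Disjoint LS LK := by
    rw [Finset.disjoint_left]
    intro ℓ hℓS hℓK
    obtain ⟨p₁, hp₁, hfp₁⟩ := Finset.mem_image.mp hℓS
    obtain ⟨p₂, hp₂, hfp₂⟩ := Finset.mem_image.mp hℓK
    apply hgood
    refine ⟨ℓ, ?_, p₂, hp₂, p₁, Or.inl hp₁, ?_, ?_, ?_⟩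
    · exact hQLines ℓ (by rw [hLineseq]; exact Finset.mem_union_left _ hℓS)
    · rintro rfl; exact hdisj p₂ hp₂ hp₁
    · rw [← hfp₂]; exact (hfQ p₂ (hQU p₂ (Or.inr hp₂))).2
    · rw [← hfp₁]; exact (hfQ p₁ (hQU p₁ (Or.inl hp₁))).2
  have hcardLK : LK.card = K.card := by
    rw [hLK]
    apply Finset.card_image_of_injOn
    intro p₁ hp₁ p₂ hp₂ hfe
    by_contra hne
    apply hgood
    refine ⟨f p₁, (hfQ p₁ (hQU p₁ (Or.inr hp₁))).1, p₁, hp₁, p₂, Or.inr hp₂, hne,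
      (hfQ p₁ (hQU p₁ (Or.inr hp₁))).2, ?_⟩
    rw [hfe]; exact (hfQ p₂ (hQU p₂ (Or.inr hp₂))).2
  have hSne : S.Nonempty := by
    obtain ⟨ℓ, -, h2⟩ := exists_two_secant (L := L) S ν hν hS Q hQS
    rcases Finset.card_pos.mp (show 0 < (S.filter (· ∈ ℓ)).card by omega) with ⟨p, hp⟩
    exact ⟨p, (Finset.mem_filter.mp hp).1⟩
  have hLS1 : 1 ≤ LS.card := Finset.card_pos.mpr (hSne.image f)
  have hqLS : S.card ≤ q * LS.card := by
    have hsub2 : S ⊆ LS.biUnion (fun ℓ => S.filter (· ∈ ℓ)) := by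
      intro p hp
      apply Finset.mem_biUnion.mpr
      exact ⟨f p, Finset.mem_image_of_mem f hp,
        Finset.mem_filter.mpr ⟨hp, (hfQ p (hQU p (Or.inl hp))).2⟩⟩
    calc S.card ≤ ∑ ℓ ∈ LS, (S.filter (· ∈ ℓ)).card :=
          le_trans (Finset.card_le_card hsub2) Finset.card_biUnion_le
      _ ≤ ∑ ℓ ∈ LS, q := by
          apply Finset.sum_le_sum
          intro ℓ hℓ
          have hQl : Q ∈ ℓ := hQLines ℓ (by rw [hLineseq]; exact Finset.mem_union_left _ hℓ)
          have : S.filter (· ∈ ℓ) ⊆ (Finset.univ.filter (· ∈ ℓ)).erase Q := by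
            intro x hx
            rw [Finset.mem_erase]
            simp only [Finset.mem_filter] at hx ⊢
            exact ⟨fun hc => hQS (hc ▸ hx.1), Finset.mem_univ x, hx.2⟩
          have h2 := Finset.card_le_card this
          rw [Finset.card_erase_of_mem (by simp [hQl]), card_pts q horder] at h2
          omega
      _ = q * LS.card := by rw [Finset.sum_const, smul_eq_mul, mul_comm]
  -- assemble the arithmetic
  have hUcard : U.card = S.card + K.card := by
    rw [hU]
    exact Finset.card_union_of_disjoint (Finset.disjoint_left.mpr fun p hp hK => hdisj p hK hp)
  have hLinescard : Lines.card = LS.card + LK.card := by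
    rw [hLineseq]
    exact Finset.card_union_of_disjoint hdisjL
  have hsumW : ∑ ℓ ∈ Lines, ((W ℓ).card + (a ℓ + 1)) = (q + 1) * Lines.card := by
    rw [Finset.sum_congr rfl hline, Finset.sum_const, smul_eq_mul, mul_comm]
  rw [Finset.sum_add_distrib, Finset.sum_add_distrib, Finset.sum_const, smul_eq_mul, mul_one]
    at hsumW
  have key : (q - 1) * K.card + (q - S.card) ≤ ∑ ℓ ∈ Lines, (W ℓ).card := by
    have e2 : (q - 1) * K.card = q * K.card - K.card := by
      rw [Nat.sub_one_mul]
    have e3 : K.card ≤ q * K.card := Nat.le_mul_of_pos_left _ (by omega)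
    have e4 : q ≤ q * LS.card := Nat.le_mul_of_pos_right _ (by omega)
    have efin : ∑ ℓ ∈ Lines, (W ℓ).card + (∑ ℓ ∈ Lines, a ℓ + Lines.card)
        = q * LS.card + q * K.card + LS.card + K.card := by
      rw [hsumW, hLinescard, hcardLK]; ring
    rw [e2]
    have hA : ∑ ℓ ∈ Lines, a ℓ ≤ S.card + K.card := by rw [← hUcard]; exact hsumA
    have hLc : Lines.card = LS.card + K.card := by rw [hLinescard, hcardLK]
    set x := q * LS.card
    set y := q * K.card
    omega
  calc (q - 1) * K.card + (q - S.card) ≤ ∑ ℓ ∈ Lines, (W ℓ).card := key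
    _ = (Lines.biUnion W).card := hcardbi.symm
    _ ≤ (fixers L S K Q).card := Finset.card_le_card hsub

end Count

section Step

variable {P L : Type*} [Fintype P] [Fintype L] [Membership P L]
  [Configuration.ProjectivePlane P L]

open scoped Classical

lemma badSet_subset_compl (S K : Finset P) :
    badSet L S K ⊆ Finset.univ.filter (fun Q => Q ∉ S ∧ Q ∉ K) := by
  intro Q hQ
  simp only [badSet, Finset.mem_filter, Finset.mem_univ, true_and] at hQ ⊢
  exact ⟨hQ.1, hQ.2.1⟩

lemma card_compl_SK (S K : Finset P) (hdisj : ∀ p ∈ K, p ∉ S) :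
    (Finset.univ.filter (fun Q => Q ∉ S ∧ Q ∉ K) : Finset P).card
      = Fintype.card P - S.card - K.card := by
  have h : (Finset.univ.filter (fun Q => Q ∉ S ∧ Q ∉ K) : Finset P) = (S ∪ K)ᶜ := by
    ext x
    simp [Finset.mem_compl, Finset.mem_union, not_or]
  rw [h, Finset.card_compl, Finset.card_union_of_disjoint
    (Finset.disjoint_left.mpr fun p hp hK => hdisj p hK hp)]
  omega

lemma step_lemma (q : ℕ) (hq : 2 ≤ q)
    (horder : Configuration.ProjectivePlane.order P L = q)
    (ν : ℕ) (hν : 1 ≤ ν) (S : Finset P) (hS : IsMuSaturating L (↑S : Set P) ν)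
    (K : Finset P) (hdisj : ∀ p ∈ K, p ∉ S)
    (hne : (badSet L S K).Nonempty) :
    ∃ R : P, R ∉ S ∧ R ∉ K ∧
      (Fintype.card P - S.card - K.card) * (badSet L S (insert R K)).card
        + (badSet L S K).card * ((q - 1) * K.card + (q - S.card))
      ≤ (badSet L S K).card * (Fintype.card P - S.card - K.card) := by
  classical
  set B := badSet L S K with hB
  set C : Finset P := Finset.univ.filter (fun Q => Q ∉ S ∧ Q ∉ K) with hC
  have hBC : B ⊆ C := badSet_subset_compl S K
  have hCcard : C.card = Fintype.card P - S.card - K.card := card_compl_SK S K hdisj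
  have hfixsub : ∀ Q ∈ B, fixers L S K Q ⊆ C := by
    intro Q hQ R hR
    simp only [fixers, Finset.mem_filter, Finset.mem_univ, true_and] at hR
    simp only [hC, Finset.mem_filter, Finset.mem_univ, true_and]
    exact ⟨hR.1, hR.2.1⟩
  have hdouble : B.card * ((q - 1) * K.card + (q - S.card))
      ≤ ∑ R ∈ C, (B.filter (fun Q => R ∈ fixers L S K Q)).card := by
    have swap : ∑ R ∈ C, (B.filter (fun Q => R ∈ fixers L S K Q)).card
        = ∑ Q ∈ B, (fixers L S K Q).card := by
      simp_rw [Finset.card_filter]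
      rw [Finset.sum_comm]
      apply Finset.sum_congr rfl
      intro Q hQ
      rw [← Finset.card_filter, Finset.filter_mem_eq_inter,
        Finset.inter_eq_right.mpr (hfixsub Q hQ)]
    rw [swap]
    calc B.card * ((q - 1) * K.card + (q - S.card))
        = ∑ _Q ∈ B, ((q - 1) * K.card + (q - S.card)) := by
          rw [Finset.sum_const, smul_eq_mul]
      _ ≤ ∑ Q ∈ B, (fixers L S K Q).card := by
          apply Finset.sum_le_sum
          intro Q hQ
          exact fixers_card q hq horder ν hν S hS K hdisj Q hQ
  obtain ⟨Q0, hQ0⟩ := hne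
  have hCne : C.Nonempty := ⟨Q0, hBC hQ0⟩
  obtain ⟨R, hRC, hmax⟩ := C.exists_max_image
    (fun R => (B.filter (fun Q => R ∈ fixers L S K Q)).card) hCne
  have h2 : B.card * ((q - 1) * K.card + (q - S.card))
      ≤ C.card * (B.filter (fun Q => R ∈ fixers L S K Q)).card := by
    refine hdouble.trans ?_
    have := Finset.sum_le_card_nsmul C
      (fun R' => (B.filter (fun Q => R' ∈ fixers L S K Q)).card)
      ((B.filter (fun Q => R ∈ fixers L S K Q)).card) hmax
    simpa [smul_eq_mul] using this
  have hsub2 : badSet L S (insert R K) ⊆ B.filter (fun Q => R ∉ fixers L S K Q) := by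
    intro Q hQ
    simp only [badSet, Finset.mem_filter, Finset.mem_univ, true_and] at hQ
    obtain ⟨h1, h2', h3⟩ := hQ
    have hQK : Q ∉ K := fun hc => h2' (Finset.mem_insert_of_mem hc)
    have hgoodmono : ¬ goodQ L S K Q := by
      rintro ⟨ℓ, hQℓ, p, hpK, p', hp', hne', hpℓ, hp'ℓ⟩
      exact h3 ⟨ℓ, hQℓ, p, Finset.mem_insert_of_mem hpK, p',
        hp'.imp id Finset.mem_insert_of_mem, hne', hpℓ, hp'ℓ⟩
    refine Finset.mem_filter.mpr ⟨Finset.mem_filter.mpr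
      ⟨Finset.mem_univ Q, h1, hQK, hgoodmono⟩, ?_⟩
    intro hfix
    simp only [fixers, Finset.mem_filter, Finset.mem_univ, true_and] at hfix
    obtain ⟨hRS, hRK, hRQ, ℓ, hQℓ, hRℓ, p, hpSK, hpℓ⟩ := hfix
    refine h3 ⟨ℓ, hQℓ, R, Finset.mem_insert_self R K, p,
      hpSK.imp id Finset.mem_insert_of_mem, ?_, hRℓ, hpℓ⟩
    rintro rfl
    rcases hpSK with h | h
    exacts [hRS h, hRK h]
  have hcount : (badSet L S (insert R K)).card
      + (B.filter (fun Q => R ∈ fixers L S K Q)).card ≤ B.card := by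
    have hpart := Finset.card_filter_add_card_filter_not
      (s := B) (p := fun Q => R ∈ fixers L S K Q)
    have hcc := Finset.card_le_card hsub2
    omega
  have hRmem := Finset.mem_filter.mp hRC
  refine ⟨R, hRmem.2.1, hRmem.2.2, ?_⟩
  rw [← hCcard]
  calc C.card * (badSet L S (insert R K)).card
        + B.card * ((q - 1) * K.card + (q - S.card))
      ≤ C.card * (badSet L S (insert R K)).card
        + C.card * (B.filter (fun Q => R ∈ fixers L S K Q)).card :=
        Nat.add_le_add_left h2 _
    _ = C.card * ((badSet L S (insert R K)).card
        + (B.filter (fun Q => R ∈ fixers L S K Q)).card) := by ring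
    _ ≤ C.card * B.card := Nat.mul_le_mul_left _ hcount
    _ = B.card * C.card := Nat.mul_comm _ _

lemma iterate_lemma (q : ℕ) (hq : 2 ≤ q)
    (horder : Configuration.ProjectivePlane.order P L = q)
    (ν : ℕ) (hν : 1 ≤ ν) (S : Finset P) (hS : IsMuSaturating L (↑S : Set P) ν)
    (j : ℕ) :
    ∃ K : Finset P, (∀ p ∈ K, p ∉ S) ∧ K.card ≤ j ∧
      (badSet L S K = ∅ ∨ (K.card = j ∧
        ((badSet L S K).card : ℝ) ≤ ((Fintype.card P : ℝ) - S.card) *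
          ∏ i ∈ Finset.range j, (1 - rho q (Fintype.card P) S.card i))) := by
  classical
  have hsn : S.card ≤ Fintype.card P := Finset.card_le_univ S
  induction j with
  | zero =>
    refine ⟨∅, by simp, le_refl 0, Or.inr ⟨rfl, ?_⟩⟩
    rw [Finset.prod_range_zero, mul_one]
    have h3 := Finset.card_le_card (badSet_subset_compl (L := L) S ∅)
    rw [card_compl_SK S (∅ : Finset P) (by simp)] at h3
    calc ((badSet L S ∅).card : ℝ) ≤ ((Fintype.card P - S.card - 0 : ℕ) : ℝ) := by
          exact_mod_cast h3
      _ = (Fintype.card P : ℝ) - S.card := by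
          rw [Nat.sub_zero, Nat.cast_sub hsn]
  | succ j ih =>
    obtain ⟨K, hdisj, hcard, hK⟩ := ih
    rcases hK with hempty | ⟨hcardeq, hbound⟩
    · exact ⟨K, hdisj, hcard.trans (Nat.le_succ j), Or.inl hempty⟩
    rcases Finset.eq_empty_or_nonempty (badSet L S K) with hempty | hne
    · exact ⟨K, hdisj, hcard.trans (Nat.le_succ j), Or.inl hempty⟩
    obtain ⟨R, hRS, hRK, hstep⟩ := step_lemma q hq horder ν hν S hS K hdisj hne
    refine ⟨insert R K, ?_, ?_, Or.inr ⟨?_, ?_⟩⟩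
    · intro p hp
      rcases Finset.mem_insert.mp hp with rfl | hp
      exacts [hRS, hdisj p hp]
    · rw [Finset.card_insert_of_notMem hRK, hcardeq]
    · rw [Finset.card_insert_of_notMem hRK, hcardeq]
    · have hb1 : 1 ≤ (badSet L S K).card := Finset.card_pos.mpr hne
      have hbc : (badSet L S K).card ≤ Fintype.card P - S.card - K.card := by
        have := Finset.card_le_card (badSet_subset_compl (L := L) S K)
        rwa [card_compl_SK S K hdisj] at this
      have hskn : S.card + K.card ≤ Fintype.card P := by
        have h := Finset.card_le_univ (S ∪ K)
        rw [Finset.card_union_of_disjoint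
          (Finset.disjoint_left.mpr fun p hp hK => hdisj p hK hp)] at h
        exact h
      set n := Fintype.card P
      set s := S.card
      set k := K.card with hk
      set b := (badSet L S K).card with hbdef
      set b' := (badSet L S (insert R K)).card with hb'def
      set F := (q - 1) * k + (q - s) with hF
      set c := n - s - k with hc
      have hc1 : 1 ≤ c := le_trans hb1 hbc
      have hFc : F ≤ c := by
        by_contra hcon
        push_neg at hcon
        have h1 : b * F ≥ b * (c + 1) := Nat.mul_le_mul_left b hcon
        have h2 : b * (c + 1) = b * c + b := by ring
        omega
      have hcastc : (c : ℝ) = (n : ℝ) - s - k := by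
        rw [hc]
        have h1 : s ≤ n := hsn
        have h2 : k ≤ n - s := by omega
        push_cast [Nat.cast_sub h2, Nat.cast_sub h1]
        ring
      have hcpos : (0:ℝ) < (c:ℝ) := by exact_mod_cast hc1
      have hrho : rho q n s k = (F : ℝ) / (c : ℝ) := by
        unfold rho
        rw [← hF, ← hcastc]
        rw [min_eq_right, max_eq_right]
        · positivity
        · rw [div_le_one hcpos]
          exact_mod_cast hFc
      have hstepR : (c:ℝ) * b' + b * F ≤ b * c := by exact_mod_cast hstep
      have hrec : (b' : ℝ) ≤ (b : ℝ) * (1 - rho q n s k) := by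
        rw [hrho, show (b:ℝ) * (1 - (F:ℝ)/(c:ℝ)) = ((b:ℝ)*c - b*F)/c by field_simp,
          le_div_iff₀ hcpos]
        linarith
      have hfac : 0 ≤ 1 - rho q n s k := by
        rw [hrho]
        have : (F:ℝ)/(c:ℝ) ≤ 1 := by
          rw [div_le_one hcpos]; exact_mod_cast hFc
        linarith
      calc (b' : ℝ) ≤ (b : ℝ) * (1 - rho q n s k) := hrec
        _ ≤ (((n:ℝ) - s) * ∏ i ∈ Finset.range j, (1 - rho q n s i))
              * (1 - rho q n s k) := mul_le_mul_of_nonneg_right hbound hfac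
        _ = ((n:ℝ) - s) * ∏ i ∈ Finset.range (j+1), (1 - rho q n s i) := by
            rw [Finset.prod_range_succ, hcardeq]
            ring

end Step

section Analytic

set_option maxHeartbeats 1000000

lemma log_le_div_e {x : ℝ} (hx : 0 < x) : Real.log x ≤ x / Real.exp 1 := by
  have h := Real.log_le_sub_one_of_pos (show 0 < x / Real.exp 1 by positivity)
  rw [Real.log_div hx.ne' (Real.exp_pos 1).ne', Real.log_exp] at h
  linarith

lemma sum_range_id_real (k : ℕ) : ∑ i ∈ Finset.range k, (i:ℝ) = k * (k-1) / 2 := by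
  induction k with
  | zero => simp
  | succ k ih =>
    rw [Finset.sum_range_succ, ih]
    push_cast
    ring

lemma xlogx_mono {u w : ℝ} (hu : 1 ≤ u) (huw : u ≤ w) :
    u * Real.log u ≤ w * Real.log w := by
  have h1 : 0 ≤ Real.log u := Real.log_nonneg hu
  have h2 : Real.log u ≤ Real.log w := Real.log_le_log (by linarith) huw
  nlinarith

lemma xlogx_step {w u : ℝ} (hw : 1 ≤ w) (hwu : w ≤ u) :
    u * Real.log u ≤ w * Real.log w + (u - w) * (Real.log u + 1) := by
  have hwpos : (0:ℝ) < w := by linarith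
  have hupos : (0:ℝ) < u := by linarith
  have h1 : Real.log u - Real.log w ≤ u / w - 1 := by
    have h := Real.log_le_sub_one_of_pos (show 0 < u / w by positivity)
    rwa [Real.log_div hupos.ne' hwpos.ne'] at h
  have hww : w * (u / w) = u := by field_simp
  have h2 : w * (Real.log u - Real.log w) ≤ u - w := by
    have h := mul_le_mul_of_nonneg_left h1 hwpos.le
    have he : w * (u / w - 1) = u - w := by field_simp
    linarith [h, he]
  have h3 : u * Real.log u - w * Real.log w
      = (u - w) * Real.log u + w * (Real.log u - Real.log w) := by ring
  have h4 : (u - w) * (Real.log u + 1) = (u - w) * Real.log u + (u - w) := by ring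
  rw [h4]
  linarith

/-- The core strict inequality `(q²+1)·ln(q²+1) < (q−1)(2L+√L)` for `q ≥ 4`. -/
lemma core_ineq (q : ℕ) (hq : 4 ≤ q) :
    ((q:ℝ)^2 + 1) * Real.log ((q:ℝ)^2 + 1)
      < ((q:ℝ) - 1) * (2 * (((q:ℝ)+1) * Real.log ((q:ℝ)+1))
          + Real.sqrt (((q:ℝ)+1) * Real.log ((q:ℝ)+1))) := by
  have hq4 : (4:ℝ) ≤ (q:ℝ) := by exact_mod_cast hq
  set lam := Real.log ((q:ℝ)+1) with hlam
  have hlampos : 0 < lam := Real.log_pos (by linarith)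
  have hL : Real.sqrt (((q:ℝ)+1)*lam) ^ 2 = ((q:ℝ)+1)*lam :=
    Real.sq_sqrt (by positivity)
  have h1 : Real.log ((q:ℝ)^2+1) ≤ 2*lam := by
    have e : 2*lam = Real.log ((((q:ℝ)+1))^2) := by
      rw [Real.log_pow]
      push_cast
      ring
    rw [e]
    apply Real.log_le_log (by positivity)
    nlinarith
  have h2 : 4*lam < ((q:ℝ)-1) * Real.sqrt (((q:ℝ)+1)*lam) := by
    have hloge := log_le_div_e (show (0:ℝ) < (q:ℝ)+1 by linarith)
    have he : (8/3:ℝ) < Real.exp 1 := lt_trans (by norm_num) Real.exp_one_gt_d9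
    have hepos := Real.exp_pos 1
    have h6 : ((q:ℝ)+1)/Real.exp 1 < (3/8) * ((q:ℝ)+1) := by
      rw [div_lt_iff₀ hepos]
      nlinarith
    have h16 : 16*lam < ((q:ℝ)-1)^2*((q:ℝ)+1) := by
      have hc : 16*lam ≤ 16*(((q:ℝ)+1)/Real.exp 1) := by
        rw [← hlam] at hloge
        linarith
      have : 16*(((q:ℝ)+1)/Real.exp 1) < 6*((q:ℝ)+1) := by linarith
      nlinarith
    have hs : (4*lam)^2 < (((q:ℝ)-1) * Real.sqrt (((q:ℝ)+1)*lam))^2 := by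
      have e : (((q:ℝ)-1) * Real.sqrt (((q:ℝ)+1)*lam))^2
          = ((q:ℝ)-1)^2 * (((q:ℝ)+1)*lam) := by
        rw [mul_pow, hL]
      rw [e]
      nlinarith
    have hnn : 0 ≤ ((q:ℝ)-1) * Real.sqrt (((q:ℝ)+1)*lam) :=
      mul_nonneg (by linarith) (Real.sqrt_nonneg _)
    exact lt_of_pow_lt_pow_left₀ 2 hnn hs
  calc ((q:ℝ)^2+1) * Real.log ((q:ℝ)^2+1) ≤ ((q:ℝ)^2+1) * (2*lam) :=
        mul_le_mul_of_nonneg_left h1 (by positivity)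
    _ < ((q:ℝ)-1)*(2*(((q:ℝ)+1)*lam)) + ((q:ℝ)-1)*Real.sqrt (((q:ℝ)+1)*lam) := by
        nlinarith
    _ = _ := by ring

lemma lam_le_r (q : ℕ) (hq : 2 ≤ q) :
    Real.log ((q:ℝ)+1) ≤ Real.sqrt (((q:ℝ)+1) * Real.log ((q:ℝ)+1)) := by
  have hq2 : (2:ℝ) ≤ (q:ℝ) := by exact_mod_cast hq
  have hlampos : 0 < Real.log ((q:ℝ)+1) := Real.log_pos (by linarith)
  have h1 : Real.log ((q:ℝ)+1) ≤ (q:ℝ)+1 := by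
    have := Real.log_le_sub_one_of_pos (show (0:ℝ) < (q:ℝ)+1 by linarith)
    linarith
  have h2 : (Real.log ((q:ℝ)+1))^2 ≤ ((q:ℝ)+1) * Real.log ((q:ℝ)+1) := by nlinarith
  calc Real.log ((q:ℝ)+1) = Real.sqrt ((Real.log ((q:ℝ)+1))^2) :=
        (Real.sqrt_sq hlampos.le).symm
    _ ≤ Real.sqrt (((q:ℝ)+1) * Real.log ((q:ℝ)+1)) := Real.sqrt_le_sqrt h2

/-- The main analytic bound. -/
lemma analytic_main (q n s k : ℕ) (hq : 4 ≤ q) (hn : n = q^2 + q + 1)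
    (hk1 : 2 * Real.sqrt (((q:ℝ)+1) * Real.log ((q:ℝ)+1)) + 1 ≤ (k:ℝ))
    (hkn : k < n - s) :
    ((n - s : ℕ) : ℝ) * Real.log ((n - s : ℕ) : ℝ)
      < ((q:ℝ) - 1) * ((k:ℝ) * ((k:ℝ)-1) / 2) + ((q - s : ℕ):ℝ) * (k:ℝ) := by
  have hq4 : (4:ℝ) ≤ (q:ℝ) := by exact_mod_cast hq
  set lam := Real.log ((q:ℝ)+1) with hlam
  set r := Real.sqrt (((q:ℝ)+1) * lam) with hr
  have hlampos : 0 < lam := Real.log_pos (by linarith)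
  have hrnn : 0 ≤ r := Real.sqrt_nonneg _
  have hL : r ^ 2 = ((q:ℝ)+1)*lam := Real.sq_sqrt (by positivity)
  have hsn : s < n := by omega
  have hu1 : 1 ≤ (n - s : ℕ) := by omega
  have hucast : ((n - s : ℕ) : ℝ) = (n:ℝ) - s := by
    rw [Nat.cast_sub hsn.le]
  have hk_part : ((q:ℝ)-1) * ((2*r+1)*(2*r)/2) ≤ ((q:ℝ)-1) * ((k:ℝ) * ((k:ℝ)-1) / 2) := by
    apply mul_le_mul_of_nonneg_left _ (by linarith)
    have h1 : (2*r+1) ≤ (k:ℝ) := hk1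
    have h2 : 2*r ≤ (k:ℝ)-1 := by linarith
    have := mul_le_mul h1 h2 (by linarith) (by linarith : (0:ℝ) ≤ (k:ℝ))
    linarith
  have hcore := core_ineq q hq
  have hexp : (2*r+1)*(2*r)/2 = 2*(((q:ℝ)+1)*lam) + r := by
    have : (2*r+1)*(2*r)/2 = 2*r^2 + r := by ring
    rw [this, hL]
  -- case split on s vs q
  rcases Nat.lt_or_ge s q with hslt | hsge
  · -- s < q : u = w + g, use xlogx_step
    have hg : ((q - s : ℕ):ℝ) = (q:ℝ) - s := by
      rw [Nat.cast_sub hslt.le]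
    have hw1 : (1:ℝ) ≤ (q:ℝ)^2+1 := by nlinarith
    have huw : (q:ℝ)^2+1 ≤ ((n-s:ℕ):ℝ) := by
      rw [hucast, hn]
      push_cast
      nlinarith [(by exact_mod_cast hslt.le : (s:ℝ) ≤ (q:ℝ))]
    have hstep := xlogx_step hw1 huw
    have hgw : ((n-s:ℕ):ℝ) - ((q:ℝ)^2+1) = (q:ℝ) - s := by
      rw [hucast, hn]
      push_cast
      ring
    have hlogu : Real.log ((n-s:ℕ):ℝ) ≤ 2*r := by
      have h1 : ((n-s:ℕ):ℝ) ≤ (((q:ℝ)+1))^2 := by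
        rw [hucast, hn]
        push_cast
        nlinarith [(Nat.cast_nonneg s : (0:ℝ) ≤ s)]
      have h2 : Real.log ((n-s:ℕ):ℝ) ≤ Real.log ((((q:ℝ)+1))^2) :=
        Real.log_le_log (by exact_mod_cast Nat.lt_of_lt_of_le Nat.zero_lt_one hu1) h1
      rw [Real.log_pow] at h2
      have := lam_le_r q (by omega)
      rw [← hlam, ← hr] at this
      push_cast at h2
      nlinarith
    have hgpos : (0:ℝ) ≤ (q:ℝ) - s := by
      have : (s:ℝ) ≤ (q:ℝ) := by exact_mod_cast hslt.le
      linarith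
    have hfin : ((n-s:ℕ):ℝ) * Real.log ((n-s:ℕ):ℝ)
        < ((q:ℝ)-1) * (2*(((q:ℝ)+1)*lam) + r) + ((q:ℝ)-s) * (2*r+1) := by
      have h5 : ((q:ℝ)-s) * (Real.log ((n-s:ℕ):ℝ) + 1) ≤ ((q:ℝ)-s) * (2*r+1) := by
        apply mul_le_mul_of_nonneg_left _ hgpos
        linarith
      rw [hgw] at hstep
      calc ((n-s:ℕ):ℝ) * Real.log ((n-s:ℕ):ℝ)
          ≤ ((q:ℝ)^2+1) * Real.log ((q:ℝ)^2+1) + ((q:ℝ)-s) * (Real.log ((n-s:ℕ):ℝ) + 1) :=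
            hstep
        _ < ((q:ℝ)-1) * (2*(((q:ℝ)+1)*lam) + r) + ((q:ℝ)-s) * (2*r+1) := by
            have := hcore
            rw [← hlam, ← hr] at this
            linarith
    have hge : ((q:ℝ)-s) * (2*r+1) ≤ ((q - s:ℕ):ℝ) * (k:ℝ) := by
      rw [hg]
      apply mul_le_mul_of_nonneg_left hk1 hgpos
    calc ((n-s:ℕ):ℝ) * Real.log ((n-s:ℕ):ℝ)
        < ((q:ℝ)-1) * (2*(((q:ℝ)+1)*lam) + r) + ((q:ℝ)-s) * (2*r+1) := hfin
      _ = ((q:ℝ)-1) * ((2*r+1)*(2*r)/2) + ((q:ℝ)-s) * (2*r+1) := by rw [hexp]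
      _ ≤ ((q:ℝ)-1) * ((k:ℝ) * ((k:ℝ)-1) / 2) + ((q - s:ℕ):ℝ) * (k:ℝ) := by
          linarith [hk_part, hge]
  · -- s ≥ q : g = 0, u ≤ q²+1
    have hg0 : ((q - s : ℕ):ℝ) = 0 := by
      rw [Nat.sub_eq_zero_of_le hsge]
      norm_num
    have huw : ((n-s:ℕ):ℝ) ≤ (q:ℝ)^2+1 := by
      rw [hucast, hn]
      push_cast
      have : (q:ℝ) ≤ (s:ℝ) := by exact_mod_cast hsge
      nlinarith
    have hmono := xlogx_mono (by exact_mod_cast hu1) huw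
    calc ((n-s:ℕ):ℝ) * Real.log ((n-s:ℕ):ℝ)
        ≤ ((q:ℝ)^2+1) * Real.log ((q:ℝ)^2+1) := hmono
      _ < ((q:ℝ)-1) * (2*(((q:ℝ)+1)*lam) + r) := by
          have := hcore
          rw [← hlam, ← hr] at this
          exact this
      _ = ((q:ℝ)-1) * ((2*r+1)*(2*r)/2) := by rw [hexp]
      _ ≤ ((q:ℝ)-1) * ((k:ℝ) * ((k:ℝ)-1) / 2) + ((q - s:ℕ):ℝ) * (k:ℝ) := by
          rw [hg0]
          linarith [hk_part]

end Analytic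

section FinalBound

lemma rho_le_one (q n s i : ℕ) : rho q n s i ≤ 1 :=
  max_le zero_le_one (min_le_left _ _)

lemma rho_nonneg (q n s i : ℕ) : 0 ≤ rho q n s i := le_max_left _ _

lemma final_bound (q n s : ℕ) (hq : 4 ≤ q) (hn : n = q^2 + q + 1)
    (k : ℕ)
    (hk1 : 2 * Real.sqrt (((q:ℝ)+1) * Real.log ((q:ℝ)+1)) + 1 ≤ (k:ℝ))
    (hkn : k < n - s) :
    ((n:ℝ) - s) * ∏ i ∈ Finset.range k, (1 - rho q n s i) < 1 := by
  have hsn : s < n := by omega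
  have hucast : ((n - s : ℕ):ℝ) = (n:ℝ) - s := Nat.cast_sub hsn.le
  have hu1 : (1:ℝ) ≤ (n:ℝ) - s := by
    rw [← hucast]
    exact_mod_cast (by omega : 1 ≤ n - s)
  have hupos : (0:ℝ) < (n:ℝ) - s := by linarith
  by_cases hall : ∀ i ∈ Finset.range k,
      (((q - 1) * i + (q - s) : ℕ) : ℝ) / ((n:ℝ) - s - i) < 1
  · have hdpos : ∀ i ∈ Finset.range k, (0:ℝ) < (n:ℝ) - s - i := by
      intro i hi
      rw [Finset.mem_range] at hi
      have h1 : i < n - s := lt_trans hi hkn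
      have h2 : (i:ℝ) < ((n - s : ℕ):ℝ) := by exact_mod_cast h1
      rw [hucast] at h2
      linarith
    have hrho_eq : ∀ i ∈ Finset.range k, rho q n s i
        = (((q - 1) * i + (q - s) : ℕ) : ℝ) / ((n:ℝ) - s - i) := by
      intro i hi
      unfold rho
      rw [min_eq_right (hall i hi).le, max_eq_right]
      exact div_nonneg (Nat.cast_nonneg _) (hdpos i hi).le
    have hsum : Real.log ((n:ℝ) - s) < ∑ i ∈ Finset.range k, rho q n s i := by
      have hlow : ∀ i ∈ Finset.range k,
          (((q - 1) * i + (q - s) : ℕ) : ℝ) / ((n:ℝ) - s) ≤ rho q n s i := by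
        intro i hi
        rw [hrho_eq i hi]
        have h3 : (n:ℝ) - s - i ≤ (n:ℝ) - s := by
          have : (0:ℝ) ≤ (i:ℝ) := Nat.cast_nonneg i
          linarith
        gcongr
        exact hdpos i hi
      have hsum1 : (∑ i ∈ Finset.range k, (((q - 1) * i + (q - s) : ℕ) : ℝ)) / ((n:ℝ) - s)
          ≤ ∑ i ∈ Finset.range k, rho q n s i := by
        rw [Finset.sum_div]
        exact Finset.sum_le_sum hlow
      have hnum : ∑ i ∈ Finset.range k, (((q - 1) * i + (q - s) : ℕ) : ℝ)
          = ((q:ℝ) - 1) * ((k:ℝ) * ((k:ℝ)-1)/2) + ((q - s : ℕ):ℝ) * (k:ℝ) := by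
        have hcast : ∀ i : ℕ, (((q - 1) * i + (q - s) : ℕ) : ℝ)
            = ((q:ℝ) - 1) * (i:ℝ) + ((q - s:ℕ):ℝ) := by
          intro i
          push_cast [Nat.cast_sub (show 1 ≤ q by omega)]
          ring
        rw [Finset.sum_congr rfl (fun i _ => hcast i), Finset.sum_add_distrib,
          ← Finset.mul_sum, sum_range_id_real, Finset.sum_const, Finset.card_range,
          nsmul_eq_mul]
        ring
      have hmain := analytic_main q n s k hq hn hk1 hkn
      rw [hucast] at hmain
      have hlt : Real.log ((n:ℝ)-s)
          < (((q:ℝ)-1) * ((k:ℝ)*((k:ℝ)-1)/2) + ((q-s:ℕ):ℝ)*(k:ℝ)) / ((n:ℝ)-s) := by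
        rw [lt_div_iff₀ hupos]
        calc Real.log ((n:ℝ)-s) * ((n:ℝ)-s) = ((n:ℝ)-s) * Real.log ((n:ℝ)-s) := by ring
          _ < _ := hmain
      rw [← hnum] at hlt
      linarith [hsum1]
    have hprod : ∏ i ∈ Finset.range k, (1 - rho q n s i)
        ≤ Real.exp (-(∑ i ∈ Finset.range k, rho q n s i)) := by
      have h1 : ∀ i ∈ Finset.range k, (0:ℝ) ≤ 1 - rho q n s i := by
        intro i _
        linarith [rho_le_one q n s i]
      have h2 : ∀ i ∈ Finset.range k, 1 - rho q n s i ≤ Real.exp (-(rho q n s i)) := by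
        intro i _
        linarith [Real.add_one_le_exp (-(rho q n s i))]
      calc ∏ i ∈ Finset.range k, (1 - rho q n s i)
          ≤ ∏ i ∈ Finset.range k, Real.exp (-(rho q n s i)) :=
            Finset.prod_le_prod h1 h2
        _ = Real.exp (∑ i ∈ Finset.range k, (-(rho q n s i))) := (Real.exp_sum _ _).symm
        _ = Real.exp (-(∑ i ∈ Finset.range k, rho q n s i)) := by
            rw [Finset.sum_neg_distrib]
    calc ((n:ℝ) - s) * ∏ i ∈ Finset.range k, (1 - rho q n s i)
        ≤ ((n:ℝ) - s) * Real.exp (-(∑ i ∈ Finset.range k, rho q n s i)) :=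
          mul_le_mul_of_nonneg_left hprod hupos.le
      _ < ((n:ℝ) - s) * Real.exp (-(Real.log ((n:ℝ) - s))) := by
          apply mul_lt_mul_of_pos_left _ hupos
          exact Real.exp_lt_exp.mpr (by linarith)
      _ = 1 := by
          rw [Real.exp_neg, Real.exp_log hupos]
          field_simp
  · push_neg at hall
    obtain ⟨i0, hi0, hge1⟩ := hall
    have hrho1 : rho q n s i0 = 1 := by
      unfold rho
      rw [min_eq_left hge1, max_eq_right zero_le_one]
    have hzero : ∏ i ∈ Finset.range k, (1 - rho q n s i) = 0 :=
      Finset.prod_eq_zero hi0 (by rw [hrho1]; ring)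
    rw [hzero, mul_zero]
    norm_num

end FinalBound

open scoped Classical

set_option maxHeartbeats 1000000 in
theorem mu_saturating_extension (q : ℕ) (hq : 2 ≤ q)
    (P L : Type*) [Fintype P] [Fintype L] [Membership P L]
    [Configuration.ProjectivePlane P L]
    (horder : Configuration.ProjectivePlane.order P L = q)
    (μ : ℕ) (hμ : 2 ≤ μ)
    (δ : ℝ) (hδ : δ = 1 / Real.sqrt ((q + 1) * Real.log (q + 1)))
    (D : ℝ) (hD : 1 ≤ D)
    (S : Finset P) (hS : IsMuSaturating L (↑S : Set P) (μ - 1))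
    (hcard : (S.card : ℝ) ≤ 2 * D * Real.sqrt ((q + 1) * Real.log (q + 1)) + 2) :
    ∃ T : Finset P, IsMuSaturating L (↑T : Set P) μ ∧
      (T.card : ℝ) ≤
        2 * (D + 1 + (D + δ) / q + δ) * Real.sqrt ((q + 1) * Real.log (q + 1)) + 2 := by
  have hq2 : (2:ℝ) ≤ (q:ℝ) := by exact_mod_cast hq
  have hqpos : (0:ℝ) < (q:ℝ) := by linarith
  have hlogpos : 0 < Real.log ((q:ℝ)+1) := Real.log_pos (by linarith)
  have hWpos : 0 < ((q:ℝ)+1) * Real.log ((q:ℝ)+1) := by positivity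
  have hrpos : 0 < Real.sqrt (((q:ℝ)+1) * Real.log ((q:ℝ)+1)) := Real.sqrt_pos.mpr hWpos
  have hδr : δ * Real.sqrt (((q:ℝ)+1) * Real.log ((q:ℝ)+1)) = 1 := by
    rw [hδ]
    field_simp
  have hδpos : 0 < δ := by
    rw [hδ]
    positivity
  have hn : Fintype.card P = q^2 + q + 1 := by
    rw [Configuration.ProjectivePlane.card_points P L, horder]
  have hsn : S.card ≤ Fintype.card P := Finset.card_le_univ S
  have hν : 1 ≤ μ - 1 := by omega
  -- the budget inequality
  have htarget : (S.card:ℝ) + (2*Real.sqrt (((q:ℝ)+1) * Real.log ((q:ℝ)+1)) + 2 + (S.card:ℝ)/q)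
      ≤ 2 * (D + 1 + (D + δ) / q + δ) * Real.sqrt (((q:ℝ)+1) * Real.log ((q:ℝ)+1)) + 2 := by
    set r := Real.sqrt (((q:ℝ)+1) * Real.log ((q:ℝ)+1)) with hr
    have hexp : 2 * (D + 1 + (D + δ) / q + δ) * r + 2
        = (2*D*r + 2) + 2*r + (2*D*r + 2*(δ*r))/q + 2*(δ*r) := by
      field_simp
      ring
    rw [hexp, hδr]
    have h1 : (S.card:ℝ) ≤ 2*D*r + 2 := hcard
    have h3 : (S.card:ℝ)/q ≤ (2*D*r + 2*1)/q := by
      apply (div_le_div_iff_of_pos_right hqpos).mpr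
      linarith
    linarith
  by_cases hq4 : q < 4
  · -- small q : the whole plane works
    refine ⟨Finset.univ, ?_, ?_⟩
    · intro Q hQ
      exact absurd (by simp : Q ∈ (↑(Finset.univ : Finset P) : Set P)) hQ
    · have hlog_ge : ∀ x : ℝ, Real.exp 1 ≤ x → (1:ℝ) ≤ Real.log x := by
        intro x hx
        rw [← Real.log_exp 1]
        exact Real.log_le_log (Real.exp_pos 1) hx
      have he3 : Real.exp 1 ≤ 3 := by linarith [Real.exp_one_lt_d9]
      have hcardP : ((Finset.univ : Finset P).card : ℝ) = ((q:ℝ)^2 + (q:ℝ) + 1) := by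
        rw [Finset.card_univ, hn]
        push_cast
        ring
      rw [hcardP]
      set r := Real.sqrt (((q:ℝ)+1) * Real.log ((q:ℝ)+1)) with hr
      have hrsq : r^2 = ((q:ℝ)+1) * Real.log ((q:ℝ)+1) := Real.sq_sqrt hWpos.le
      interval_cases q
      · -- q = 2
        have hc2 : ((2:ℕ):ℝ) = 2 := by norm_num
        have hlog3 : (1:ℝ) ≤ Real.log ((2:ℝ)+1) := hlog_ge _ (by linarith)
        have hr1 : (1:ℝ) ≤ r := by
          have h := Real.sqrt_le_sqrt
            (show (1:ℝ) ≤ ((2:ℝ)+1) * Real.log ((2:ℝ)+1) by nlinarith)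
          rw [Real.sqrt_one] at h
          calc (1:ℝ) ≤ Real.sqrt (((2:ℝ)+1) * Real.log ((2:ℝ)+1)) := h
            _ = r := by rw [hr, hc2]
        have hDr : (1:ℝ) ≤ D * r := by nlinarith
        push_cast
        nlinarith [hDr, hr1, hδr, hδpos, hrpos]
      · -- q = 3
        have hc3 : ((3:ℕ):ℝ) = 3 := by norm_num
        have hlog4 : (1:ℝ) ≤ Real.log ((3:ℝ)+1) := hlog_ge _ (by linarith)
        have hr2 : (2:ℝ) ≤ r := by
          have h := Real.sqrt_le_sqrt
            (show (4:ℝ) ≤ ((3:ℝ)+1) * Real.log ((3:ℝ)+1) by nlinarith)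
          have h4 : Real.sqrt 4 = 2 := by
            rw [show (4:ℝ) = 2^2 by norm_num, Real.sqrt_sq (by norm_num : (0:ℝ) ≤ 2)]
          rw [h4] at h
          calc (2:ℝ) ≤ Real.sqrt (((3:ℝ)+1) * Real.log ((3:ℝ)+1)) := h
            _ = r := by rw [hr, hc3]
        have hDr : r ≤ D * r := by nlinarith
        push_cast
        nlinarith [hDr, hr2, hδr, hδpos, hrpos]
  · push_neg at hq4
    set k : ℕ := 2 + Nat.floor (2*Real.sqrt (((q:ℝ)+1) * Real.log ((q:ℝ)+1))) + S.card / q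
      with hkdef
    have hkM : (k:ℝ) ≤ 2*Real.sqrt (((q:ℝ)+1) * Real.log ((q:ℝ)+1)) + 2 + (S.card:ℝ)/q := by
      have h1 : ((Nat.floor (2*Real.sqrt (((q:ℝ)+1) * Real.log ((q:ℝ)+1)))):ℝ)
          ≤ 2*Real.sqrt (((q:ℝ)+1) * Real.log ((q:ℝ)+1)) := Nat.floor_le (by positivity)
      have h2 : ((S.card/q : ℕ):ℝ) ≤ (S.card:ℝ)/(q:ℝ) := Nat.cast_div_le
      rw [hkdef]
      push_cast
      linarith
    have hk1 : 2*Real.sqrt (((q:ℝ)+1) * Real.log ((q:ℝ)+1)) + 1 ≤ (k:ℝ) := by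
      have h1 := Nat.lt_floor_add_one (2*Real.sqrt (((q:ℝ)+1) * Real.log ((q:ℝ)+1)))
      rw [hkdef]
      push_cast
      linarith
    by_cases htriv : Fintype.card P - S.card ≤ k
    · refine ⟨Finset.univ, ?_, ?_⟩
      · intro Q hQ
        exact absurd (by simp : Q ∈ (↑(Finset.univ : Finset P) : Set P)) hQ
      · have h1 : Fintype.card P ≤ S.card + k := by omega
        have h2 : ((Finset.univ : Finset P).card : ℝ) ≤ (S.card:ℝ) + (k:ℝ) := by
          rw [Finset.card_univ]
          exact_mod_cast h1
        calc ((Finset.univ : Finset P).card : ℝ) ≤ (S.card:ℝ) + (k:ℝ) := h2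
          _ ≤ (S.card:ℝ) + (2*Real.sqrt (((q:ℝ)+1) * Real.log ((q:ℝ)+1)) + 2 + (S.card:ℝ)/q) := by
              linarith [hkM]
          _ ≤ _ := htarget
    · push_neg at htriv
      obtain ⟨K, hdisj, hKcard, hKalt⟩ := iterate_lemma q hq horder (μ-1) hν S hS k
      have hbadempty : badSet L S K = ∅ := by
        rcases hKalt with h | ⟨hKeq, hbound⟩
        · exact h
        · have hfb := final_bound q (Fintype.card P) S.card hq4 hn k hk1 htriv
          have hlt1 : ((badSet L S K).card : ℝ) < 1 := lt_of_le_of_lt hbound hfb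
          have : (badSet L S K).card = 0 := by
            by_contra hc
            have : 1 ≤ (badSet L S K).card := by omega
            have : (1:ℝ) ≤ ((badSet L S K).card : ℝ) := by exact_mod_cast this
            linarith
          exact Finset.card_eq_zero.mp this
      refine ⟨S ∪ K, ?_, ?_⟩
      · intro Q hQ
        have hQS : Q ∉ S ∧ Q ∉ K := by
          simpa [Finset.coe_union, Set.mem_union] using hQ
        have hgood : goodQ L S K Q := by
          by_contra hng
          have hmem : Q ∈ badSet L S K := by
            simp only [badSet, Finset.mem_filter, Finset.mem_univ, true_and]
            exact ⟨hQS.1, hQS.2, hng⟩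
          rw [hbadempty] at hmem
          exact absurd hmem (Finset.notMem_empty Q)
        have hgain := secant_gain S K hdisj Q hgood
        have hsat := hS Q (by simpa using hQS.1)
        omega
      · have hTcard : (S ∪ K).card ≤ S.card + k :=
          le_trans (Finset.card_union_le S K) (by omega)
        calc ((S ∪ K).card : ℝ) ≤ (S.card:ℝ) + (k:ℝ) := by exact_mod_cast hTcard
          _ ≤ (S.card:ℝ) + (2*Real.sqrt (((q:ℝ)+1) * Real.log ((q:ℝ)+1)) + 2 + (S.card:ℝ)/q) := by
              linarith [hkM]
          _ ≤ _ := htarget
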